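/- Let (μ,σ) be an SDE on an open set M ⊆ ℝⁿ and let V = (Y,C,τ,H) be an infinitesimal symmetry of (μ,σ), i.e. the determining equations Y(μ) − L(Y) − σ·H + τμ = 0 and [Y,σ] + ½τσ + σ·C = 0 hold on M. Then for every smooth function f ∈ C^∞(M): Y(L(f)) − L(Y(f)) = −τ·L(f) + (∇f)ᵀ·σ·H, where ∇f is the gradient of f. -/

import Mathlib

open Matrix

/-- Partial derivative `∂ᵢ f` of a scalar function on `ℝⁿ`. -/
noncomputable def pd {n : ℕ} (i : Fin n) (f : (Fin n → ℝ) → ℝ) (x : Fin n → ℝ) : ℝ :=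
  fderiv ℝ f x (Pi.single i 1)

/-- Action `Y(f) = Yⁱ ∂ᵢ f` of a vector field on a scalar function. -/
noncomputable def vfd {n : ℕ} (Y : (Fin n → ℝ) → Fin n → ℝ)
    (f : (Fin n → ℝ) → ℝ) (x : Fin n → ℝ) : ℝ :=
  ∑ j, Y x j * pd j f x

/-- Infinitesimal generator `L(f) = ½ (σσᵀ)^{ij} ∂ᵢ∂ⱼ f + μⁱ ∂ᵢ f` of the SDE `(μ,σ)`. -/
noncomputable def gen {n m : ℕ} (μ : (Fin n → ℝ) → Fin n → ℝ)
    (σ : (Fin n → ℝ) → Matrix (Fin n) (Fin m) ℝ)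
    (f : (Fin n → ℝ) → ℝ) (x : Fin n → ℝ) : ℝ :=
  (1 / 2) * ∑ i, ∑ j, (∑ α, σ x i α * σ x j α) * pd i (pd j f) x
    + ∑ i, μ x i * pd i f x

/-- Entrywise smoothness of a vector-valued function on a set. -/
def SmoothVec {n k : ℕ} (M : Set (Fin n → ℝ)) (f : (Fin n → ℝ) → Fin k → ℝ) : Prop :=
  ∀ i, ContDiffOn ℝ (⊤ : ℕ∞) (fun x => f x i) M

/-- Entrywise smoothness of a matrix-valued function on a set. -/
def SmoothMat {n k l : ℕ} (M : Set (Fin n → ℝ))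
    (f : (Fin n → ℝ) → Matrix (Fin k) (Fin l) ℝ) : Prop :=
  ∀ i j, ContDiffOn ℝ (⊤ : ℕ∞) (fun x => f x i j) M

/-- The determining equations: `V = (Y,C,τ,H)` is an infinitesimal symmetry of the SDE
`(μ,σ)` on `M`, i.e. `Y(μ) − L(Y) − σ·H + τμ = 0` and `[Y,σ] + ½τσ + σ·C = 0` on `M`. -/
def DetEqs {n m : ℕ} (M : Set (Fin n → ℝ))
    (μ : (Fin n → ℝ) → Fin n → ℝ) (σ : (Fin n → ℝ) → Matrix (Fin n) (Fin m) ℝ)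
    (Y : (Fin n → ℝ) → Fin n → ℝ) (C : (Fin n → ℝ) → Matrix (Fin m) (Fin m) ℝ)
    (τ : (Fin n → ℝ) → ℝ) (H : (Fin n → ℝ) → Fin m → ℝ) : Prop :=
  (∀ x ∈ M, ∀ i, vfd Y (fun y => μ y i) x - gen μ σ (fun y => Y y i) x
      - (∑ α, σ x i α * H x α) + τ x * μ x i = 0) ∧
  (∀ x ∈ M, ∀ i, ∀ α, vfd Y (fun y => σ y i α) x
      - (∑ j, σ x j α * pd j (fun y => Y y i) x)
      + (1 / 2) * τ x * σ x i α + (∑ β, σ x i β * C x β α) = 0)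

/- ### Auxiliary calculus lemmas -/

section helpers
variable {n : ℕ} {M : Set (Fin n → ℝ)}

lemma pd_congr_nhds {f g : (Fin n → ℝ) → ℝ} {x} (h : f =ᶠ[nhds x] g) (i : Fin n) :
    pd i f x = pd i g x := by
  unfold pd; rw [Filter.EventuallyEq.fderiv_eq h]

lemma diffAt (hM : IsOpen M) {f : (Fin n → ℝ) → ℝ} (hf : ContDiffOn ℝ (⊤:ℕ∞) f M)
    {x} (hx : x ∈ M) : DifferentiableAt ℝ f x :=
  (hf.contDiffAt (hM.mem_nhds hx)).differentiableAt (by simp)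

lemma contDiffOn_pd (hM : IsOpen M) {f} (hf : ContDiffOn ℝ (⊤:ℕ∞) f M) (i : Fin n) :
    ContDiffOn ℝ (⊤:ℕ∞) (pd i f) M :=
  (hf.fderiv_of_isOpen (m := (⊤:ℕ∞)) hM (by exact_mod_cast le_top)).clm_apply contDiffOn_const

lemma pd_add {f g : (Fin n → ℝ) → ℝ} {x} (hf : DifferentiableAt ℝ f x)
    (hg : DifferentiableAt ℝ g x) (i : Fin n) :
    pd i (fun y => f y + g y) x = pd i f x + pd i g x := by
  unfold pd; rw [fderiv_fun_add hf hg]; simp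

lemma pd_mul {f g : (Fin n → ℝ) → ℝ} {x} (hf : DifferentiableAt ℝ f x)
    (hg : DifferentiableAt ℝ g x) (i : Fin n) :
    pd i (fun y => f y * g y) x = pd i f x * g x + f x * pd i g x := by
  unfold pd; rw [fderiv_fun_mul hf hg]; simp; ring

lemma pd_const_mul {f : (Fin n → ℝ) → ℝ} {x} (c : ℝ) (hf : DifferentiableAt ℝ f x) (i : Fin n) :
    pd i (fun y => c * f y) x = c * pd i f x := by
  unfold pd; rw [fderiv_const_mul hf]; simp

lemma pd_sum {ι : Type*} (s : Finset ι) {F : ι → (Fin n → ℝ) → ℝ} {x}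
    (hF : ∀ j ∈ s, DifferentiableAt ℝ (F j) x) (i : Fin n) :
    pd i (fun y => ∑ j ∈ s, F j y) x = ∑ j ∈ s, pd i (F j) x := by
  unfold pd; rw [fderiv_fun_sum hF]; simp

lemma pd_swap (hM : IsOpen M) {f} (hf : ContDiffOn ℝ (⊤:ℕ∞) f M) {x} (hx : x ∈ M) (i j : Fin n) :
    pd i (pd j f) x = pd j (pd i f) x := by
  have hd : ContDiffOn ℝ (⊤:ℕ∞) (fderiv ℝ f) M :=
    hf.fderiv_of_isOpen (m := (⊤:ℕ∞)) hM (by exact_mod_cast le_top)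
  have hdx : DifferentiableAt ℝ (fderiv ℝ f) x :=
    (hd.contDiffAt (hM.mem_nhds hx)).differentiableAt (by simp)
  have key : ∀ v w : Fin n → ℝ, fderiv ℝ (fun y => fderiv ℝ f y v) x w
      = fderiv ℝ (fderiv ℝ f) x w v := by
    intro v w
    rw [fderiv_clm_apply hdx (differentiableAt_const v)]
    simp
  have hsymm : ∀ v w, fderiv ℝ (fderiv ℝ f) x v w = fderiv ℝ (fderiv ℝ f) x w v := by
    have h2 : ContDiffAt ℝ 2 f x := (hf.contDiffAt (hM.mem_nhds hx)).of_le (by norm_cast)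
    exact h2.isSymmSndFDerivAt (by norm_num)
  show pd i (fun y => fderiv ℝ f y _) x = pd j (fun y => fderiv ℝ f y _) x
  unfold pd
  rw [key, key, hsymm]

end helpers

lemma sE {ι : Type*} [Fintype ι] {f g : ι → ℝ} (h : ∀ x, f x = g x) :
    ∑ x, f x = ∑ x, g x := Finset.sum_congr rfl fun x _ => h x

lemma key_algebra {n m : ℕ} (s : Fin n → Fin m → ℝ) (Yv μv G1 : Fin n → ℝ)
    (G2 : Fin n → Fin n → ℝ) (G3 : Fin n → Fin n → Fin n → ℝ)
    (dY : Fin n → Fin n → ℝ) (d2Y : Fin n → Fin n → Fin n → ℝ)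
    (dμ : Fin n → Fin n → ℝ) (dσ : Fin n → Fin n → Fin m → ℝ)
    (t : ℝ) (Hv : Fin m → ℝ) (Cv : Fin m → Fin m → ℝ)
    (hE1 : ∀ k, ∑ j, Yv j * dμ j k = ((1/2) * ∑ i, ∑ j, (∑ α, s i α * s j α) * d2Y i j k + ∑ i, μv i * dY i k) + ((∑ α, s k α * Hv α) - t * μv k))
    (hE2 : ∀ i α, ∑ j, Yv j * dσ j i α = (∑ j, s j α * dY j i) - ((1/2) * t * s i α + ∑ β, s i β * Cv β α))
    (hG2 : ∀ i j, G2 i j = G2 j i)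
    (hG3 : ∀ k i j, G3 k i j = G3 i j k)
    (hC : ∀ β α, Cv β α = - Cv α β) :
    (∑ k, Yv k * ((1/2) * ∑ i, ∑ j, ((∑ α, (dσ k i α * s j α + s i α * dσ k j α)) * G2 i j + (∑ α, s i α * s j α) * G3 k i j) + ∑ i, (dμ k i * G1 i + μv i * G2 k i)))
      - ((1/2) * ∑ i, ∑ j, (∑ α, s i α * s j α) * (∑ k, (d2Y i j k * G1 k + dY j k * G2 i k + dY i k * G2 j k + Yv k * G3 i j k)) + ∑ i, μv i * ∑ k, (dY i k * G1 k + Yv k * G2 i k))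
      = -t * ((1/2) * ∑ i, ∑ j, (∑ α, s i α * s j α) * G2 i j + ∑ i, μv i * G1 i)
        + ∑ i, ∑ α, G1 i * s i α * Hv α := by
  simp only [Finset.mul_sum, Finset.sum_mul, mul_add, add_mul, Finset.sum_add_distrib, neg_mul]
  have A1 : (∑ k, ∑ i, ∑ j : Fin n, ∑ α, Yv k * (1/2 * (s i α * dσ k j α * G2 i j)))
      = (∑ k, ∑ i, ∑ j : Fin n, ∑ α, Yv k * (1/2 * (dσ k i α * s j α * G2 i j))) := by
    refine sE fun k => ?_
    rw [Finset.sum_comm]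
    exact sE fun i => sE fun j => sE fun α => by rw [hG2 j i]; ring
  have A2 : (∑ i, ∑ j, ∑ k : Fin n, ∑ α, 1/2 * (s i α * s j α * (dY i k * G2 j k)))
      = (∑ i, ∑ j, ∑ k : Fin n, ∑ α, 1/2 * (s i α * s j α * (dY j k * G2 i k))) := by
    rw [Finset.sum_comm]
    exact sE fun i => sE fun j => sE fun k => sE fun α => by ring
  have A3 : (∑ k, ∑ i, ∑ j : Fin n, ∑ α, Yv k * (1/2 * (s i α * s j α * G3 k i j)))
      = (∑ i, ∑ j, ∑ k : Fin n, ∑ α, 1/2 * (s i α * s j α * (Yv k * G3 i j k))) := by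
    rw [Finset.sum_comm]
    refine sE fun i => ?_
    rw [Finset.sum_comm]
    exact sE fun j => sE fun k => sE fun α => by rw [hG3 k i j]; ring
  have A4 : (∑ k, ∑ i : Fin n, Yv k * (μv i * G2 k i))
      = (∑ i, ∑ k : Fin n, μv i * (Yv k * G2 i k)) := by
    rw [Finset.sum_comm]
    exact sE fun i => sE fun k => by rw [hG2 k i]; ring
  have A5 : (∑ k, ∑ i, ∑ j : Fin n, ∑ α, Yv k * (1/2 * (dσ k i α * s j α * G2 i j)))
      = (∑ i, ∑ j : Fin n, ∑ α, (∑ l, s l α * dY l i) * (1/2 * (s j α * G2 i j)))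
        - ((∑ i, ∑ j : Fin n, ∑ α, ((1/2) * t * s i α) * (1/2 * (s j α * G2 i j)))
          + (∑ i, ∑ j : Fin n, ∑ α, (∑ β, s i β * Cv β α) * (1/2 * (s j α * G2 i j)))) := by
    have e1 : (∑ k, ∑ i, ∑ j : Fin n, ∑ α, Yv k * (1/2 * (dσ k i α * s j α * G2 i j)))
        = ∑ i, ∑ j : Fin n, ∑ α, (∑ k, Yv k * dσ k i α) * (1/2 * (s j α * G2 i j)) := by
      rw [Finset.sum_comm]
      refine sE fun i => ?_
      rw [Finset.sum_comm]
      refine sE fun j => ?_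
      rw [Finset.sum_comm]
      exact sE fun α => by rw [Finset.sum_mul]; exact sE fun k => by ring
    rw [e1]
    have e2 : (∑ i, ∑ j : Fin n, ∑ α, (∑ k, Yv k * dσ k i α) * (1/2 * (s j α * G2 i j)))
        = ∑ i, ∑ j : Fin n, ∑ α, ((∑ l, s l α * dY l i) - ((1/2) * t * s i α + ∑ β, s i β * Cv β α)) * (1/2 * (s j α * G2 i j)) :=
      sE fun i => sE fun j => sE fun α => by rw [hE2 i α]
    rw [e2]
    simp only [sub_mul, add_mul, Finset.sum_sub_distrib, Finset.sum_add_distrib]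
  have A6 : (∑ i, ∑ j, ∑ k : Fin n, ∑ α, 1/2 * (s i α * s j α * (dY j k * G2 i k)))
      = (∑ i, ∑ j : Fin n, ∑ α, (∑ l, s l α * dY l i) * (1/2 * (s j α * G2 i j))) := by
    have e1 : (∑ i, ∑ j, ∑ k : Fin n, ∑ α, 1/2 * (s i α * s j α * (dY j k * G2 i k)))
        = ∑ k, ∑ i : Fin n, ∑ α, ∑ j : Fin n, 1/2 * (s i α * s j α * (dY j k * G2 i k)) := by
      refine Eq.trans (sE fun i => Finset.sum_comm) (Eq.trans Finset.sum_comm ?_)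
      exact sE fun k => sE fun i => Finset.sum_comm
    rw [e1]
    refine sE fun k => sE fun i => sE fun α => ?_
    rw [Finset.sum_mul]
    exact sE fun j => by rw [hG2 i k]; ring
  have A7 : (∑ i, ∑ j : Fin n, ∑ α, -(t * (1/2 * (s i α * s j α * G2 i j))))
      = (-2) * ∑ i, ∑ j : Fin n, ∑ α, ((1/2) * t * s i α) * (1/2 * (s j α * G2 i j)) := by
    simp only [Finset.mul_sum]
    exact sE fun i => sE fun j => sE fun α => by ring
  have A8 : (∑ i, ∑ j : Fin n, ∑ α, (∑ β, s i β * Cv β α) * (1/2 * (s j α * G2 i j))) = 0 := by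
    have e1 : (∑ i, ∑ j : Fin n, ∑ α, (∑ β, s i β * Cv β α) * (1/2 * (s j α * G2 i j)))
        = ∑ i, ∑ j : Fin n, ∑ α, ∑ β, s i β * Cv β α * (1/2 * (s j α * G2 i j)) :=
      sE fun i => sE fun j => sE fun α => by rw [Finset.sum_mul]
    have e2 : (∑ i, ∑ j : Fin n, ∑ α, ∑ β, s i β * Cv β α * (1/2 * (s j α * G2 i j)))
        = ∑ i, ∑ j : Fin n, ∑ α, ∑ β, -(s i β * Cv β α * (1/2 * (s j α * G2 i j))) := by
      refine Eq.trans Finset.sum_comm ?_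
      refine sE fun i => sE fun j => ?_
      refine Eq.trans Finset.sum_comm ?_
      refine sE fun α => sE fun β => ?_
      rw [hC α β, hG2 j i]
      ring
    have e3 : (∑ i, ∑ j : Fin n, ∑ α, ∑ β, -(s i β * Cv β α * (1/2 * (s j α * G2 i j))))
        = -∑ i, ∑ j : Fin n, ∑ α, ∑ β, s i β * Cv β α * (1/2 * (s j α * G2 i j)) := by
      simp only [Finset.sum_neg_distrib]
    rw [e1]
    linarith [e2.trans e3]
  have A9 : (∑ k, ∑ i : Fin n, Yv k * (dμ k i * G1 i))
      = (∑ i, ∑ j, ∑ k : Fin n, ∑ α, 1/2 * (s i α * s j α * (d2Y i j k * G1 k)))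
        + (∑ i, ∑ k : Fin n, μv i * (dY i k * G1 k))
        + (∑ i, ∑ α, G1 i * s i α * Hv α)
        + (∑ i : Fin n, -(t * (μv i * G1 i))) := by
    have e1 : (∑ k, ∑ i : Fin n, Yv k * (dμ k i * G1 i))
        = ∑ i, (∑ k, Yv k * dμ k i) * G1 i := by
      rw [Finset.sum_comm]
      exact sE fun i => by rw [Finset.sum_mul]; exact sE fun k => by ring
    rw [e1]
    have e2 : (∑ i, (∑ k, Yv k * dμ k i) * G1 i)
        = ∑ i, (((1/2) * ∑ a, ∑ b, (∑ α, s a α * s b α) * d2Y a b i + ∑ a, μv a * dY a i) + ((∑ α, s i α * Hv α) - t * μv i)) * G1 i :=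
      sE fun i => by rw [hE1 i]
    rw [e2]
    have eA : (∑ i, ((1/2) * ∑ a, ∑ b, (∑ α, s a α * s b α) * d2Y a b i) * G1 i)
        = ∑ i, ∑ j, ∑ k : Fin n, ∑ α, 1/2 * (s i α * s j α * (d2Y i j k * G1 k)) := by
      have f1 : (∑ i, ((1/2) * ∑ a, ∑ b, (∑ α, s a α * s b α) * d2Y a b i) * G1 i)
          = ∑ i, ∑ a, ∑ b : Fin n, ∑ α, 1/2 * (s a α * s b α * (d2Y a b i * G1 i)) := by
        refine sE fun i => ?_
        simp only [Finset.mul_sum, Finset.sum_mul]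
        exact sE fun a => sE fun b => sE fun α => by ring
      rw [f1, Finset.sum_comm]
      exact sE fun a => Finset.sum_comm
    have eB : (∑ i, (∑ a, μv a * dY a i) * G1 i)
        = ∑ i, ∑ k : Fin n, μv i * (dY i k * G1 k) := by
      have f1 : (∑ i, (∑ a, μv a * dY a i) * G1 i)
          = ∑ i, ∑ a : Fin n, μv a * dY a i * G1 i :=
        sE fun i => by rw [Finset.sum_mul]
      rw [f1, Finset.sum_comm]
      exact sE fun a => sE fun i => by ring
    have eC : (∑ i, (∑ α, s i α * Hv α) * G1 i)
        = ∑ i, ∑ α, G1 i * s i α * Hv α :=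
      sE fun i => by rw [Finset.sum_mul]; exact sE fun α => by ring
    simp only [add_mul, sub_mul, Finset.sum_add_distrib, Finset.sum_sub_distrib]
    rw [eA, eB, eC]
    have eD : (∑ i : Fin n, t * μv i * G1 i) = -∑ i : Fin n, -(t * (μv i * G1 i)) := by
      rw [Finset.sum_neg_distrib, neg_neg]
      exact sE fun i => by ring
    rw [eD]
    ring
  linear_combination A1 - A2 + A3 + A4 + 2*A5 - 2*A6 - A7 - 2*A8 + A9

/-- First identity of the technical Lemma: if `V = (Y,C,τ,H)` is an infinitesimal symmetry
of `(μ,σ)` then, for every smooth `f`, `Y(L(f)) − L(Y(f)) = −τ·L(f) + ∇(f)·σ·H`. -/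
theorem statement5 {n m : ℕ} (M : Set (Fin n → ℝ)) (hM : IsOpen M)
    (μ : (Fin n → ℝ) → Fin n → ℝ) (σ : (Fin n → ℝ) → Matrix (Fin n) (Fin m) ℝ)
    (Y : (Fin n → ℝ) → Fin n → ℝ) (C : (Fin n → ℝ) → Matrix (Fin m) (Fin m) ℝ)
    (τ : (Fin n → ℝ) → ℝ) (H : (Fin n → ℝ) → Fin m → ℝ)
    (hμ : SmoothVec M μ) (hσ : SmoothMat M σ) (hY : SmoothVec M Y)
    (hCs : SmoothMat M C) (hτ : ContDiffOn ℝ (⊤ : ℕ∞) τ M) (hH : SmoothVec M H)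
    (hC : ∀ x ∈ M, (C x)ᵀ = -(C x))
    (hsym : DetEqs M μ σ Y C τ H)
    (f : (Fin n → ℝ) → ℝ) (hf : ContDiffOn ℝ (⊤ : ℕ∞) f M) :
    ∀ x ∈ M,
      vfd Y (gen μ σ f) x - gen μ σ (vfd Y f) x =
        -(τ x) * gen μ σ f x + ∑ i, ∑ α, pd i f x * σ x i α * H x α := by
  intro x hx
  -- smoothness registry
  have sfp : ∀ j, ContDiffOn ℝ (⊤:ℕ∞) (pd j f) M := fun j => contDiffOn_pd hM hf j
  have sfpp : ∀ a b, ContDiffOn ℝ (⊤:ℕ∞) (pd a (pd b f)) M :=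
    fun a b => contDiffOn_pd hM (sfp b) a
  have sYp : ∀ a k, ContDiffOn ℝ (⊤:ℕ∞) (pd a (fun y => Y y k)) M :=
    fun a k => contDiffOn_pd hM (hY k) a
  have sσσ : ∀ i j, ContDiffOn ℝ (⊤:ℕ∞) (fun y => ∑ α, σ y i α * σ y j α) M :=
    fun i j => ContDiffOn.sum fun α _ => (hσ i α).mul (hσ j α)
  have sAF : ∀ i j, ContDiffOn ℝ (⊤:ℕ∞) (fun y => (∑ α, σ y i α * σ y j α) * pd i (pd j f) y) M :=
    fun i j => (sσσ i j).mul (sfpp i j)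
  have sSS : ContDiffOn ℝ (⊤:ℕ∞) (fun y => ∑ i, ∑ j, (∑ α, σ y i α * σ y j α) * pd i (pd j f) y) M :=
    ContDiffOn.sum fun i _ => ContDiffOn.sum fun j _ => sAF i j
  have sMu : ∀ i, ContDiffOn ℝ (⊤:ℕ∞) (fun y => μ y i * pd i f y) M :=
    fun i => (hμ i).mul (sfp i)
  -- expansion of pd k (gen μ σ f) at x
  have Egen : ∀ k, pd k (gen μ σ f) x
      = (1/2) * ∑ i, ∑ j, ((∑ α, (pd k (fun y => σ y i α) x * σ x j α + σ x i α * pd k (fun y => σ y j α) x)) * pd i (pd j f) x + (∑ α, σ x i α * σ x j α) * pd k (pd i (pd j f)) x)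
        + ∑ i, (pd k (fun y => μ y i) x * pd i f x + μ x i * pd k (pd i f) x) := by
    intro k
    calc pd k (gen μ σ f) x
        = pd k (fun y => (1/2) * ∑ i, ∑ j, (∑ α, σ y i α * σ y j α) * pd i (pd j f) y) x
          + pd k (fun y => ∑ i, μ y i * pd i f y) x := by
          exact pd_add ((differentiableAt_const _).mul (diffAt hM sSS hx))
            (diffAt hM (ContDiffOn.sum fun i _ => sMu i) hx) k
      _ = (1/2) * pd k (fun y => ∑ i, ∑ j, (∑ α, σ y i α * σ y j α) * pd i (pd j f) y) x
          + ∑ i, pd k (fun y => μ y i * pd i f y) x := by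
          rw [pd_const_mul _ (diffAt hM sSS hx),
            pd_sum _ (fun i _ => diffAt hM (sMu i) hx)]
      _ = (1/2) * ∑ i, pd k (fun y => ∑ j, (∑ α, σ y i α * σ y j α) * pd i (pd j f) y) x
          + ∑ i, (pd k (fun y => μ y i) x * pd i f x + μ x i * pd k (pd i f) x) := by
          rw [pd_sum _ (fun i _ => diffAt hM (ContDiffOn.sum fun j _ => sAF i j) hx)]
          exact congrArg₂ (· + ·) rfl
            (sE fun i => pd_mul (diffAt hM (hμ i) hx) (diffAt hM (sfp i) hx) k)
      _ = (1/2) * ∑ i, ∑ j, ((∑ α, (pd k (fun y => σ y i α) x * σ x j α + σ x i α * pd k (fun y => σ y j α) x)) * pd i (pd j f) x + (∑ α, σ x i α * σ x j α) * pd k (pd i (pd j f)) x)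
          + ∑ i, (pd k (fun y => μ y i) x * pd i f x + μ x i * pd k (pd i f) x) := by
          refine congrArg₂ (· + ·) (congrArg ((1/2 : ℝ) * ·) (sE fun i => ?_)) rfl
          rw [pd_sum _ (fun j _ => diffAt hM (sAF i j) hx)]
          refine sE fun j => ?_
          rw [pd_mul (diffAt hM (sσσ i j) hx) (diffAt hM (sfpp i j) hx),
            pd_sum (F := fun α => fun y => σ y i α * σ y j α) _ (fun α _ => (diffAt hM (hσ i α) hx).mul (diffAt hM (hσ j α) hx))]
          exact congrArg₂ (· + ·) (congrArg (· * pd i (pd j f) x)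
            (sE fun α => pd_mul (diffAt hM (hσ i α) hx) (diffAt hM (hσ j α) hx) k)) rfl
  -- expansion of pd j (vfd Y f) on M
  have EvfdM : ∀ y ∈ M, ∀ j, pd j (vfd Y f) y
      = ∑ k, (pd j (fun z => Y z k) y * pd k f y + Y y k * pd j (pd k f) y) := by
    intro y hy j
    calc pd j (vfd Y f) y
        = ∑ k, pd j (fun z => Y z k * pd k f z) y :=
          pd_sum _ (fun k _ => (diffAt hM (hY k) hy).mul (diffAt hM (sfp k) hy)) j
      _ = ∑ k, (pd j (fun z => Y z k) y * pd k f y + Y y k * pd j (pd k f) y) :=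
          sE fun k => pd_mul (diffAt hM (hY k) hy) (diffAt hM (sfp k) hy) j
  -- second-order expansion of vfd Y f at x
  have E3 : ∀ i j, pd i (pd j (vfd Y f)) x
      = ∑ k, (pd i (pd j (fun z => Y z k)) x * pd k f x + pd j (fun z => Y z k) x * pd i (pd k f) x + pd i (fun z => Y z k) x * pd j (pd k f) x + Y x k * pd i (pd j (pd k f)) x) := by
    intro i j
    have hev : pd j (vfd Y f) =ᶠ[nhds x]
        fun y => ∑ k, (pd j (fun z => Y z k) y * pd k f y + Y y k * pd j (pd k f) y) := by
      filter_upwards [hM.mem_nhds hx] with y hy using EvfdM y hy j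
    rw [pd_congr_nhds hev i]
    calc pd i (fun y => ∑ k, (pd j (fun z => Y z k) y * pd k f y + Y y k * pd j (pd k f) y)) x
        = ∑ k, pd i (fun y => pd j (fun z => Y z k) y * pd k f y + Y y k * pd j (pd k f) y) x :=
          pd_sum _ (fun k _ => ((diffAt hM (sYp j k) hx).mul (diffAt hM (sfp k) hx)).add
            ((diffAt hM (hY k) hx).mul (diffAt hM (sfpp j k) hx))) i
      _ = ∑ k, (pd i (fun y => pd j (fun z => Y z k) y * pd k f y) x
            + pd i (fun y => Y y k * pd j (pd k f) y) x) :=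
          sE fun k => pd_add ((diffAt hM (sYp j k) hx).mul (diffAt hM (sfp k) hx))
            ((diffAt hM (hY k) hx).mul (diffAt hM (sfpp j k) hx)) i
      _ = ∑ k, (pd i (pd j (fun z => Y z k)) x * pd k f x + pd j (fun z => Y z k) x * pd i (pd k f) x + pd i (fun z => Y z k) x * pd j (pd k f) x + Y x k * pd i (pd j (pd k f)) x) := by
          refine sE fun k => ?_
          rw [pd_mul (diffAt hM (sYp j k) hx) (diffAt hM (sfp k) hx),
            pd_mul (diffAt hM (hY k) hx) (diffAt hM (sfpp j k) hx)]
          ring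
  -- symmetry of second derivatives
  have hG2 : ∀ i j, pd i (pd j f) x = pd j (pd i f) x := fun i j => pd_swap hM hf hx i j
  -- symmetry of third derivatives
  have hG3 : ∀ k i j, pd k (pd i (pd j f)) x = pd i (pd j (pd k f)) x := by
    intro k i j
    have h1 : pd k (pd i (pd j f)) x = pd i (pd k (pd j f)) x := pd_swap hM (sfp j) hx k i
    have hev : pd k (pd j f) =ᶠ[nhds x] pd j (pd k f) := by
      filter_upwards [hM.mem_nhds hx] with y hy using pd_swap hM hf hy k j
    rw [h1, pd_congr_nhds hev i]
  -- determining equations at x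
  have hE1 : ∀ k, (∑ j, Y x j * pd j (fun y => μ y k) x)
      = ((1/2) * ∑ i, ∑ j, (∑ α, σ x i α * σ x j α) * pd i (pd j (fun y => Y y k)) x
          + ∑ i, μ x i * pd i (fun y => Y y k) x)
        + ((∑ α, σ x k α * H x α) - τ x * μ x k) := by
    intro k
    have h := hsym.1 x hx k
    unfold vfd gen at h
    linarith
  have hE2 : ∀ i α, (∑ j, Y x j * pd j (fun y => σ y i α) x)
      = (∑ j, σ x j α * pd j (fun y => Y y i) x)
        - ((1/2) * τ x * σ x i α + ∑ β, σ x i β * C x β α) := by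
    intro i α
    have h := hsym.2 x hx i α
    unfold vfd at h
    linarith
  have hCv : ∀ β α, C x β α = -(C x α β) := by
    intro β α
    have h := congrFun (congrFun (hC x hx) α) β
    simpa [Matrix.transpose_apply, Matrix.neg_apply] using h
  -- assemble
  calc vfd Y (gen μ σ f) x - gen μ σ (vfd Y f) x
      = (∑ k, Y x k * ((1/2) * ∑ i, ∑ j, ((∑ α, (pd k (fun y => σ y i α) x * σ x j α + σ x i α * pd k (fun y => σ y j α) x)) * pd i (pd j f) x + (∑ α, σ x i α * σ x j α) * pd k (pd i (pd j f)) x) + ∑ i, (pd k (fun y => μ y i) x * pd i f x + μ x i * pd k (pd i f) x)))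
        - ((1/2) * ∑ i, ∑ j, (∑ α, σ x i α * σ x j α) * (∑ k, (pd i (pd j (fun z => Y z k)) x * pd k f x + pd j (fun z => Y z k) x * pd i (pd k f) x + pd i (fun z => Y z k) x * pd j (pd k f) x + Y x k * pd i (pd j (pd k f)) x)) + ∑ i, μ x i * ∑ k, (pd i (fun z => Y z k) x * pd k f x + Y x k * pd i (pd k f) x)) := by
        have l1 : vfd Y (gen μ σ f) x
            = ∑ k, Y x k * ((1/2) * ∑ i, ∑ j, ((∑ α, (pd k (fun y => σ y i α) x * σ x j α + σ x i α * pd k (fun y => σ y j α) x)) * pd i (pd j f) x + (∑ α, σ x i α * σ x j α) * pd k (pd i (pd j f)) x) + ∑ i, (pd k (fun y => μ y i) x * pd i f x + μ x i * pd k (pd i f) x)) :=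
          sE fun k => by rw [Egen k]
        have r1 : gen μ σ (vfd Y f) x
            = (1/2) * ∑ i, ∑ j, (∑ α, σ x i α * σ x j α) * (∑ k, (pd i (pd j (fun z => Y z k)) x * pd k f x + pd j (fun z => Y z k) x * pd i (pd k f) x + pd i (fun z => Y z k) x * pd j (pd k f) x + Y x k * pd i (pd j (pd k f)) x)) + ∑ i, μ x i * ∑ k, (pd i (fun z => Y z k) x * pd k f x + Y x k * pd i (pd k f) x) := by
          refine congrArg₂ (· + ·) (congrArg ((1/2 : ℝ) * ·)
            (sE fun i => sE fun j => ?_)) (sE fun i => ?_)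
          · exact congrArg ((∑ α, σ x i α * σ x j α) * ·) (E3 i j)
          · exact congrArg (μ x i * ·) (EvfdM x hx i)
        rw [l1, r1]
    _ = -(τ x) * ((1/2) * ∑ i, ∑ j, (∑ α, σ x i α * σ x j α) * pd i (pd j f) x + ∑ i, μ x i * pd i f x)
        + ∑ i, ∑ α, pd i f x * σ x i α * H x α :=
        key_algebra (fun i α => σ x i α) (fun k => Y x k) (fun i => μ x i) (fun i => pd i f x)
          (fun a b => pd a (pd b f) x) (fun a b c => pd a (pd b (pd c f)) x)
          (fun a b => pd a (fun z => Y z b) x) (fun a b c => pd a (pd b (fun z => Y z c)) x)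
          (fun a b => pd a (fun y => μ y b) x) (fun a b α => pd a (fun y => σ y b α) x)
          (τ x) (fun α => H x α) (fun β α => C x β α) hE1 hE2 hG2 hG3 hCv
    _ = -(τ x) * gen μ σ f x + ∑ i, ∑ α, pd i f x * σ x i α * H x α := rfl
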